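/- arXiv:1505.02799 — 5 statements merged into one kernel-verified Lean document; each statement's English description precedes it below -/
import Mathlib

section
/- Let $G \in \mathbb{C}^{n \times m}$, and let $\Gamma_1, \Gamma_2$ be disjoint sets of column indices of $G$ such that $|\Gamma_1| + |\Gamma_2| > \mathrm{rank}\, G$. Set $\Lambda = (\Gamma_1 \times \Gamma_1) \cup (\Gamma_2 \times \Gamma_2)$. Then there exists a nonzero Hermitian matrix $N \in \mathbb{C}^{m \times m}$ supported on $\Lambda$ with $G N G^* = 0$; equivalently, the columns of $\overline{G} \otimes G$ indexed by $\Lambda$ are linearly dependent. -/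
open Complex Matrix Module

/-- The column of `conj G ⊗ G` indexed by the pair `(λ, λ')` of column indices of `G`. -/
def kronCol {n m : ℕ} (G : Matrix (Fin n) (Fin m) ℂ) (l : Fin m × Fin m) :
    Fin n × Fin n → ℂ :=
  fun ii => (starRingEnd ℂ) (G ii.1 l.1) * G ii.2 l.2

/-- if `Γ₁, Γ₂` are disjoint column index sets with `|Γ₁| + |Γ₂| > rank G`, then
(for `Pat = Γ₁×Γ₁ ∪ Γ₂×Γ₂`) there is a nonzero Hermitian `N` supported on `Pat` with
`G N Gᴴ = 0`; equivalently the columns of `conj G ⊗ G` indexed by `Pat` are dependent. -/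
theorem stmt5 {n m : ℕ} (G : Matrix (Fin n) (Fin m) ℂ) (Γ₁ Γ₂ : Finset (Fin m))
    (hdisj : Disjoint Γ₁ Γ₂) (hcard : G.rank < Γ₁.card + Γ₂.card)
    (Pat : Set (Fin m × Fin m))
    (hPat : Pat = (Γ₁ : Set (Fin m)) ×ˢ (Γ₁ : Set (Fin m)) ∪
      (Γ₂ : Set (Fin m)) ×ˢ (Γ₂ : Set (Fin m))) :
    (∃ N : Matrix (Fin m) (Fin m) ℂ, N ≠ 0 ∧ N.IsHermitian ∧
      (∀ i j : Fin m, N i j ≠ 0 → (i, j) ∈ Pat) ∧ G * N * Gᴴ = 0) ∧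
    ¬ LinearIndependent ℂ (fun l : Pat => kronCol G l.val) := by
  classical
  set Γ : Finset (Fin m) := Γ₁ ∪ Γ₂ with hΓ
  set G' := G.submatrix id (Subtype.val : {x // x ∈ Γ} → Fin m) with hG'
  -- extension by zero commutes with mulVec
  have hext : ∀ w : {x // x ∈ Γ} → ℂ,
      G.mulVec (fun j => if h : j ∈ Γ then w ⟨j, h⟩ else 0) = G'.mulVec w := by
    intro w
    funext a
    simp only [mulVec, dotProduct, mul_dite, mul_zero, hG', submatrix_apply, id_eq]
    rw [← Finset.sum_subset (Finset.subset_univ Γ) (fun x _ hx => dif_neg hx),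
      ← Finset.sum_attach Γ, Finset.univ_eq_attach]
    simp
  -- there is a nonzero kernel vector supported on Γ
  have hker : ∃ w : {x // x ∈ Γ} → ℂ, w ≠ 0 ∧ G'.mulVec w = 0 := by
    have hrange : LinearMap.range G'.mulVecLin ≤ LinearMap.range G.mulVecLin := by
      rintro x ⟨w, rfl⟩
      exact ⟨fun j => if h : j ∈ Γ then w ⟨j, h⟩ else 0, hext w⟩
    by_contra h
    push_neg at h
    have hker0 : LinearMap.ker G'.mulVecLin = ⊥ := by
      rw [LinearMap.ker_eq_bot']
      intro w hw
      by_contra hw0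
      exact (h w hw0) hw
    have h1 := LinearMap.finrank_range_add_finrank_ker G'.mulVecLin
    rw [hker0, finrank_bot, add_zero] at h1
    have h2 : finrank ℂ (LinearMap.range G'.mulVecLin) ≤ G.rank :=
      Submodule.finrank_mono hrange
    rw [h1] at h2
    have h3 : finrank ℂ ({x // x ∈ Γ} → ℂ) = Γ.card := by
      simp [Module.finrank_pi]
    have h4 : Γ.card = Γ₁.card + Γ₂.card := Finset.card_union_of_disjoint hdisj
    omega
  obtain ⟨w, hw0, hwker⟩ := hker
  -- the extended kernel vector and its restrictions
  set v : Fin m → ℂ := fun j => if h : j ∈ Γ then w ⟨j, h⟩ else 0 with hv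
  set v₁ : Fin m → ℂ := fun j => if j ∈ Γ₁ then v j else 0 with hv₁
  set v₂ : Fin m → ℂ := fun j => if j ∈ Γ₂ then v j else 0 with hv₂
  have hv12 : v = v₁ + v₂ := by
    funext j
    simp only [Pi.add_apply, hv₁, hv₂]
    by_cases h1 : j ∈ Γ₁
    · have h2 : j ∉ Γ₂ := fun h2 => (Finset.disjoint_left.mp hdisj h1) h2
      simp [h1, h2]
    · by_cases h2 : j ∈ Γ₂
      · simp [h1, h2]
      · have hj : j ∉ Γ := by simp [hΓ, h1, h2]
        simp [h1, h2, hv, hj]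
  have hGv : G.mulVec v = 0 := by rw [hv, hext]; exact hwker
  have hvneg : G.mulVec v₁ = - G.mulVec v₂ := by
    have := hGv
    rw [hv12, mulVec_add] at this
    linear_combination (norm := module) this
  -- the matrix N
  set N : Matrix (Fin m) (Fin m) ℂ := Matrix.of fun i j =>
    v₁ i * (starRingEnd ℂ) (v₁ j) - v₂ i * (starRingEnd ℂ) (v₂ j) with hN
  -- support of N
  have hsupp : ∀ i j : Fin m, N i j ≠ 0 → (i, j) ∈ Pat := by
    intro i j hij
    rw [hPat]
    by_cases h1 : i ∈ Γ₁ ∧ j ∈ Γ₁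
    · exact Or.inl (by simpa using h1)
    · by_cases h2 : i ∈ Γ₂ ∧ j ∈ Γ₂
      · exact Or.inr (by simpa using h2)
      · exfalso
        apply hij
        have e1 : v₁ i * (starRingEnd ℂ) (v₁ j) = 0 := by
          rcases not_and_or.mp h1 with h | h <;> simp [hv₁, h]
        have e2 : v₂ i * (starRingEnd ℂ) (v₂ j) = 0 := by
          rcases not_and_or.mp h2 with h | h <;> simp [hv₂, h]
        simp [hN, e1, e2]
  -- N is nonzero
  have hNne : ∃ k : Fin m, k ∈ Γ ∧ N k k ≠ 0 := by
    obtain ⟨k0, hk0⟩ : ∃ k0, w k0 ≠ 0 := by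
      by_contra h
      push_neg at h
      exact hw0 (funext h)
    refine ⟨k0.val, k0.2, ?_⟩
    have hvk : v k0.val = w k0 := by simp [hv, k0.2]
    have hc : (starRingEnd ℂ) (v k0.val) ≠ 0 := by
      rw [hvk]
      exact star_ne_zero.mpr hk0
    have hvne : v k0.val ≠ 0 := hvk ▸ hk0
    have hNe : N k0.val k0.val
        = v₁ k0.val * (starRingEnd ℂ) (v₁ k0.val) - v₂ k0.val * (starRingEnd ℂ) (v₂ k0.val) :=
      rfl
    rcases Finset.mem_union.mp k0.2 with h1 | h2
    · have h2 : k0.val ∉ Γ₂ := fun h => (Finset.disjoint_left.mp hdisj h1) h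
      have e1 : v₁ k0.val = v k0.val := if_pos h1
      have e2 : v₂ k0.val = 0 := if_neg h2
      rw [hNe, e1, e2]
      simpa using mul_ne_zero hvne hc
    · have h1 : k0.val ∉ Γ₁ := fun h => (Finset.disjoint_left.mp hdisj h) h2
      have e1 : v₁ k0.val = 0 := if_neg h1
      have e2 : v₂ k0.val = v k0.val := if_pos h2
      rw [hNe, e1, e2]
      simpa using mul_ne_zero hvne hc
  obtain ⟨k, hkΓ, hNkk⟩ := hNne
  -- N is Hermitian
  have hherm : N.IsHermitian := by
    rw [Matrix.IsHermitian]
    ext i j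
    simp only [conjTranspose_apply, hN, of_apply, star_sub, star_mul', RCLike.star_def,
      Complex.conj_conj]
    ring
  -- G N Gᴴ = 0
  have hGN : G * N * Gᴴ = 0 := by
    have key : ∀ (u : Fin m → ℂ) (a b : Fin n),
        G.mulVec u a * (starRingEnd ℂ) (G.mulVec u b)
          = ∑ i, ∑ j, G a i * (u i * (starRingEnd ℂ) (u j)) * (starRingEnd ℂ) (G b j) := by
      intro u a b
      simp only [mulVec, dotProduct, map_sum, Finset.sum_mul_sum]
      refine Finset.sum_congr rfl fun i _ => Finset.sum_congr rfl fun j _ => ?_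
      rw [RingHom.map_mul]; ring
    ext a b
    simp only [mul_apply, conjTranspose_apply, Matrix.zero_apply, hN, of_apply, RCLike.star_def]
    calc ∑ j, (∑ i, G a i * (v₁ i * (starRingEnd ℂ) (v₁ j) - v₂ i * (starRingEnd ℂ) (v₂ j)))
            * (starRingEnd ℂ) (G b j)
        = ∑ i, ∑ j, (G a i * (v₁ i * (starRingEnd ℂ) (v₁ j)) * (starRingEnd ℂ) (G b j)
            - G a i * (v₂ i * (starRingEnd ℂ) (v₂ j)) * (starRingEnd ℂ) (G b j)) := by
          rw [Finset.sum_comm]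
          exact Finset.sum_congr rfl fun j _ => by
            rw [Finset.sum_mul]
            exact Finset.sum_congr rfl fun i _ => by ring
      _ = G.mulVec v₁ a * (starRingEnd ℂ) (G.mulVec v₁ b)
            - G.mulVec v₂ a * (starRingEnd ℂ) (G.mulVec v₂ b) := by
          simp only [Finset.sum_sub_distrib]
          rw [key v₁ a b, key v₂ a b]
      _ = 0 := by rw [hvneg]; simp [mul_comm]
  -- Pat is symmetric
  have hPatsymm : ∀ p : Fin m × Fin m, (p.1, p.2) ∈ Pat → (p.2, p.1) ∈ Pat := by
    intro p hp
    rw [hPat] at hp ⊢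
    rcases hp with h | h
    · exact Or.inl ⟨h.2, h.1⟩
    · exact Or.inr ⟨h.2, h.1⟩
  -- (k, k) ∈ Pat
  have hkkPat : (k, k) ∈ Pat := by
    rw [hPat]
    rw [hΓ, Finset.mem_union] at hkΓ
    rcases hkΓ with h | h
    · exact Or.inl ⟨h, h⟩
    · exact Or.inr ⟨h, h⟩
  refine ⟨⟨N, ?_, hherm, hsupp, hGN⟩, ?_⟩
  · intro h
    exact hNkk (by rw [h]; rfl)
  -- linear dependence
  · haveI : Fintype ↥Pat := Fintype.ofFinite _
    rw [Fintype.not_linearIndependent_iff]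
    refine ⟨fun l => N l.val.2 l.val.1, ?_, ⟨(k, k), hkkPat⟩, hNkk⟩
    funext ii
    rw [Finset.sum_apply]
    simp only [Pi.smul_apply, smul_eq_mul]
    have hcoe : ∑ l : ↥Pat, N l.val.2 l.val.1 * kronCol G l.val ii
        = ∑ l ∈ Pat.toFinset, N l.2 l.1 * kronCol G l ii :=
      Finset.sum_set_coe (f := fun l => N l.2 l.1 * kronCol G l ii) Pat
    rw [hcoe]
    rw [Finset.sum_subset (Finset.subset_univ _) (fun p _ hp => ?_)]
    · -- full sum equals (G N Gᴴ) entry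
      have h0 : (G * N * Gᴴ) ii.2 ii.1 = 0 := by rw [hGN]; rfl
      calc ∑ l : Fin m × Fin m, N l.2 l.1 * kronCol G l ii
          = ∑ j, ∑ i, (G ii.2 i * N i j) * (starRingEnd ℂ) (G ii.1 j) := by
            rw [Fintype.sum_prod_type]
            exact Finset.sum_congr rfl fun j _ => Finset.sum_congr rfl fun i _ => by
              simp only [kronCol]; ring
        _ = (G * N * Gᴴ) ii.2 ii.1 := by
            simp only [mul_apply, conjTranspose_apply, RCLike.star_def, Finset.sum_mul]
        _ = 0 := h0
    · -- terms outside Pat vanish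
      have hp' : p ∉ Pat := fun h => hp (Set.mem_toFinset.mpr h)
      have : N p.2 p.1 = 0 := by
        by_contra hne
        exact hp' (hPatsymm (p.2, p.1) (hsupp p.2 p.1 hne))
      rw [this, zero_mul]
end

section
/- Let $L \geq 1$ and let $c \in \mathbb{C}^L$ be such that $V_c c[p,q] = \sum_r e^{-2\pi i p r/L} c[r]\overline{c[r-q]} \neq 0$ for all $(p,q) \in \mathbb{Z}_L \times \mathbb{Z}_L$. For each $(k,n)$, define the rank-one operator $P_{k,n} x = \langle x, M^n T^k c\rangle\, M^n T^k c$ on $\mathbb{C}^L$. Then the family $\{P_{k,n}\}_{(k,n) \in \mathbb{Z}_L \times \mathbb{Z}_L}$ is linearly independent in the space of linear operators on $\mathbb{C}^L$. -/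
open Complex Matrix

/-- The character value `e^{2πi x / L}` for `x : ZMod L`. -/
noncomputable def zchar (L : ℕ) [NeZero L] (x : ZMod L) : ℂ :=
  Complex.exp (2 * (Real.pi : ℂ) * Complex.I * (x.val : ℂ) / (L : ℂ))

/-- The Gabor atom `M^n T^k c`, i.e. `m ↦ e^{2πi n m / L} c[m-k]`. -/
noncomputable def gaborAtom (L : ℕ) [NeZero L] (c : ZMod L → ℂ) (k n : ZMod L) :
    ZMod L → ℂ :=
  fun m => zchar L (n * m) * c (m - k)

/-- The finite short-time Fourier transform of `c` with respect to itself. -/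
noncomputable def Vcc (L : ℕ) [NeZero L] (c : ZMod L → ℂ) (p q : ZMod L) : ℂ :=
  ∑ r : ZMod L,
    Complex.exp (-(2 * (Real.pi : ℂ) * Complex.I * (p.val : ℂ) * (r.val : ℂ)) / (L : ℂ)) *
      c r * (starRingEnd ℂ) (c (r - q))

/-- The rank-one operator `P_{k,n} x = ⟨x, M^n T^k c⟩ M^n T^k c`, as a matrix. -/
noncomputable def Pmat (L : ℕ) [NeZero L] (c : ZMod L → ℂ) (k n : ZMod L) :
    Matrix (ZMod L) (ZMod L) ℂ :=
  Matrix.of fun m r => gaborAtom L c k n m * (starRingEnd ℂ) (gaborAtom L c k n r)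

lemma zchar_eq (L : ℕ) [NeZero L] (x : ZMod L) : zchar L x = ZMod.stdAddChar x := by
  rw [ZMod.stdAddChar_apply, ZMod.toCircle_apply, zchar]

lemma conj_psi (L : ℕ) [NeZero L] (x : ZMod L) :
    (starRingEnd ℂ) (ZMod.stdAddChar (N := L) x) = ZMod.stdAddChar (-x) := by
  rw [ZMod.stdAddChar_apply, ZMod.stdAddChar_apply, AddChar.map_neg_eq_inv,
    Circle.coe_inv_eq_conj]

lemma orth (L : ℕ) [NeZero L] (b : ZMod L) :
    ∑ x : ZMod L, ZMod.stdAddChar (x * b) = if b = 0 then (L : ℂ) else 0 := by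
  rw [AddChar.sum_mulShift b (ZMod.isPrimitive_stdAddChar L), ZMod.card]
  split_ifs <;> simp

lemma exp_eq_psi (L : ℕ) [NeZero L] (p r : ZMod L) :
    Complex.exp (-(2 * (Real.pi : ℂ) * Complex.I * (p.val : ℂ) * (r.val : ℂ)) / (L : ℂ))
      = ZMod.stdAddChar (-(p * r)) := by
  have h2 : p * r = ((p.val * r.val : ℤ) : ZMod L) := by
    push_cast [ZMod.natCast_val, ZMod.cast_id]
    rfl
  rw [AddChar.map_neg_eq_inv, h2, ZMod.stdAddChar_coe, ← Complex.exp_neg]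
  congr 1
  push_cast
  ring

lemma Vcc_eq (L : ℕ) [NeZero L] (c : ZMod L → ℂ) (p q : ZMod L) :
    Vcc L c p q = ∑ r : ZMod L,
      ZMod.stdAddChar (-(p * r)) * c r * (starRingEnd ℂ) (c (r - q)) := by
  unfold Vcc
  exact Finset.sum_congr rfl fun r _ => by rw [exp_eq_psi]

/-- if `V_c c` vanishes nowhere, the `L²` rank-one projections `P_{k,n}` onto
the Gabor atoms `M^n T^k c` are linearly independent. -/
theorem stmt13 (L : ℕ) [NeZero L] (c : ZMod L → ℂ)
    (hfull : ∀ p q : ZMod L, Vcc L c p q ≠ 0) :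
    LinearIndependent ℂ (fun kn : ZMod L × ZMod L => Pmat L c kn.1 kn.2) := by
  classical
  set ψ : AddChar (ZMod L) ℂ := ZMod.stdAddChar (N := L) with hψdef
  have hconj : ∀ x : ZMod L, (starRingEnd ℂ) (ψ x) = ψ (-x) := conj_psi L
  rw [Fintype.linearIndependent_iff]
  intro g h kn₀
  -- entrywise equation
  have h0 : ∀ m r : ZMod L, ∑ kn : ZMod L × ZMod L,
      g kn * Pmat L c kn.1 kn.2 m r = 0 := by
    intro m r
    have := congrFun (congrFun h m) r
    simpa [Matrix.sum_apply] using this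
  -- key per-atom Fourier identity
  have key : ∀ p q k n : ZMod L,
      ∑ m : ZMod L, ψ (-(p * m)) * Pmat L c k n m (m - q)
        = ψ (n * q - p * k) * Vcc L c p q := by
    intro p q k n
    rw [Vcc_eq, Finset.mul_sum,
      ← Equiv.sum_comp (Equiv.addRight k) (fun m => ψ (-(p * m)) * Pmat L c k n m (m - q))]
    apply Finset.sum_congr rfl
    intro s _
    simp only [Equiv.coe_addRight, Pmat, Matrix.of_apply, gaborAtom, zchar_eq,
      _root_.map_mul, hconj]
    have e1 : s + k - k = s := by ring
    have e2 : s + k - q - k = s - q := by ring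
    rw [e1, e2]
    rw [← hψdef, hconj]
    have hchar : ψ (-(p * (s + k))) * ψ (n * (s + k)) * ψ (-(n * (s + k - q)))
        = ψ (n * q - p * k) * ψ (-(p * s)) := by
      rw [← AddChar.map_add_eq_mul, ← AddChar.map_add_eq_mul, ← AddChar.map_add_eq_mul]
      congr 1
      ring
    linear_combination (c s * (starRingEnd ℂ) (c (s - q))) * hchar
  -- the spreading coefficients vanish
  have hF : ∀ p q : ZMod L,
      ∑ kn : ZMod L × ZMod L, g kn * ψ (kn.2 * q - p * kn.1) = 0 := by
    intro p q
    have h1 : (∑ kn : ZMod L × ZMod L, g kn * ψ (kn.2 * q - p * kn.1)) * Vcc L c p q = 0 := by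
      rw [Finset.sum_mul]
      have step : ∀ kn : ZMod L × ZMod L,
          g kn * ψ (kn.2 * q - p * kn.1) * Vcc L c p q
            = ∑ m : ZMod L, g kn * (ψ (-(p * m)) * Pmat L c kn.1 kn.2 m (m - q)) := by
        intro kn
        rw [← Finset.mul_sum, key p q kn.1 kn.2]
        ring
      rw [Finset.sum_congr rfl (fun kn _ => step kn), Finset.sum_comm]
      apply Finset.sum_eq_zero
      intro m _
      calc ∑ kn : ZMod L × ZMod L, g kn * (ψ (-(p * m)) * Pmat L c kn.1 kn.2 m (m - q))
          = ψ (-(p * m)) * ∑ kn : ZMod L × ZMod L, g kn * Pmat L c kn.1 kn.2 m (m - q) := by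
            rw [Finset.mul_sum]
            exact Finset.sum_congr rfl fun kn _ => by ring
        _ = 0 := by rw [h0 m (m - q), mul_zero]
    exact (mul_eq_zero.mp h1).resolve_right (hfull p q)
  -- Fourier inversion via orthogonality
  obtain ⟨k₀, n₀⟩ := kn₀
  have h2 : (0 : ℂ) = ∑ kn : ZMod L × ZMod L, g kn *
      ((if k₀ - kn.1 = 0 then (L : ℂ) else 0) * (if kn.2 - n₀ = 0 then (L : ℂ) else 0)) := by
    calc (0 : ℂ)
        = ∑ p : ZMod L, ∑ q : ZMod L, ψ (p * k₀ - q * n₀) *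
            ∑ kn : ZMod L × ZMod L, g kn * ψ (kn.2 * q - p * kn.1) := by
          simp [hF]
      _ = ∑ p : ZMod L, ∑ q : ZMod L, ∑ kn : ZMod L × ZMod L,
            g kn * (ψ (p * (k₀ - kn.1)) * ψ (q * (kn.2 - n₀))) := by
          apply Finset.sum_congr rfl; intro p _
          apply Finset.sum_congr rfl; intro q _
          rw [Finset.mul_sum]
          apply Finset.sum_congr rfl; intro kn _
          have hc : ψ (p * k₀ - q * n₀) * ψ (kn.2 * q - p * kn.1)
              = ψ (p * (k₀ - kn.1)) * ψ (q * (kn.2 - n₀)) := by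
            rw [← AddChar.map_add_eq_mul, ← AddChar.map_add_eq_mul]
            congr 1
            ring
          linear_combination g kn * hc
      _ = ∑ kn : ZMod L × ZMod L, g kn *
            ((∑ p : ZMod L, ψ (p * (k₀ - kn.1))) * (∑ q : ZMod L, ψ (q * (kn.2 - n₀)))) := by
          rw [show (∑ p : ZMod L, ∑ q : ZMod L, ∑ kn : ZMod L × ZMod L,
                g kn * (ψ (p * (k₀ - kn.1)) * ψ (q * (kn.2 - n₀))))
              = ∑ p : ZMod L, ∑ kn : ZMod L × ZMod L, ∑ q : ZMod L,
                g kn * (ψ (p * (k₀ - kn.1)) * ψ (q * (kn.2 - n₀)))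
            from Finset.sum_congr rfl (fun p _ => Finset.sum_comm), Finset.sum_comm]
          apply Finset.sum_congr rfl; intro kn _
          rw [Finset.sum_mul_sum, Finset.mul_sum]
          apply Finset.sum_congr rfl; intro p _
          rw [Finset.mul_sum]
      _ = ∑ kn : ZMod L × ZMod L, g kn *
            ((if k₀ - kn.1 = 0 then (L : ℂ) else 0) * (if kn.2 - n₀ = 0 then (L : ℂ) else 0)) := by
          apply Finset.sum_congr rfl; intro kn _
          rw [orth, orth]
  have h3 : (0 : ℂ) = g (k₀, n₀) * ((L : ℂ) * (L : ℂ)) := by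
    rw [h2, Fintype.sum_eq_single (k₀, n₀)]
    · simp
    · intro kn hkn
      rcases not_and_or.mp
          (fun hh : kn.1 = k₀ ∧ kn.2 = n₀ => hkn (Prod.ext_iff.mpr ⟨hh.1, hh.2⟩)) with h1 | h2
      · have hz : ¬ (k₀ - kn.1 = 0) := fun hh => h1 (by linear_combination -hh)
        simp [hz]
      · have hz : ¬ (kn.2 - n₀ = 0) := fun hh => h2 (by linear_combination hh)
        simp [hz]
  have hL : (L : ℂ) ≠ 0 := Nat.cast_ne_zero.mpr (NeZero.ne L)
  field_simp at h3
  exact (mul_eq_zero.mp h3.symm).resolve_right (pow_ne_zero 2 hL)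
end

section
/- Let $c = (c_0, c_1) \in \mathbb{C}^2$, let $G$ be the $2 \times 4$ Gabor matrix with columns $M^n T^k c$, $k,n \in \{0,1\}$ (where $T c = (c_1, c_0)$ and $M c = (c_0, -c_1)$), and let $G_{\mathrm{diag}}$ be the $4 \times 4$ matrix whose columns are $\overline{(M^n T^k c)} \otimes (M^n T^k c)$, $(k,n) \in \{0,1\}^2$. Then $\det G_{\mathrm{diag}} = \pm 4 (|c_0|^4 - |c_1|^4)(c_0^2 \overline{c_1}^2 - c_1^2 \overline{c_0}^2)$ (up to a sign depending on column ordering); in particular, $G_{\mathrm{diag}}$ is invertible whenever $|c_0| \neq |c_1|$ and $c_0^2 \overline{c_1}^2 \notin \mathbb{R}$ or more precisely $c_0^2\overline{c_1}^2 \neq c_1^2 \overline{c_0}^2$. -/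
open Complex Matrix

/-- The Gabor atom `M^n T^k c` for `L = 2` and window `c = (c₀, c₁)`, where
`T c = (c₁, c₀)` and `M c = (c₀, -c₁)`. -/
def atom2 (c₀ c₁ : ℂ) (kn : Fin 2 × Fin 2) : Fin 2 → ℂ :=
  fun m => (if kn.2 = 1 ∧ m = 1 then -1 else 1) * (if m + kn.1 = 0 then c₀ else c₁)

/-- The `4 × 4` matrix whose columns are `conj(M^n T^k c) ⊗ (M^n T^k c)`. -/
def Gdiag (c₀ c₁ : ℂ) : Matrix (Fin 2 × Fin 2) (Fin 2 × Fin 2) ℂ :=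
  Matrix.of fun ii kn => (starRingEnd ℂ) (atom2 c₀ c₁ kn ii.1) * atom2 c₀ c₁ kn ii.2

lemma gdiag_det (c₀ c₁ : ℂ) :
    (Gdiag c₀ c₁).det =
      4 * ((c₀ * (starRingEnd ℂ) c₀) ^ 2 - (c₁ * (starRingEnd ℂ) c₁) ^ 2) *
        (c₀ ^ 2 * ((starRingEnd ℂ) c₁) ^ 2 - c₁ ^ 2 * ((starRingEnd ℂ) c₀) ^ 2) := by
  set d₀ := (starRingEnd ℂ) c₀ with hd₀
  set d₁ := (starRingEnd ℂ) c₁ with hd₁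
  have h : Gdiag c₀ c₁ =
      (!![d₀*c₀, d₀*c₀, d₁*c₁, d₁*c₁;
         d₀*c₁, -(d₀*c₁), d₁*c₀, -(d₁*c₀);
         d₁*c₀, -(d₁*c₀), d₀*c₁, -(d₀*c₁);
         d₁*c₁, d₁*c₁, d₀*c₀, d₀*c₀] : Matrix (Fin 4) (Fin 4) ℂ).submatrix
        finProdFinEquiv finProdFinEquiv := by
    ext ⟨i1, i2⟩ ⟨k, n⟩
    fin_cases i1 <;> fin_cases i2 <;> fin_cases k <;> fin_cases n <;>
      simp [Gdiag, atom2, finProdFinEquiv, Matrix.submatrix_apply, hd₀, hd₁]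
  rw [h, Matrix.det_submatrix_equiv_self]
  simp [Matrix.det_succ_row_zero, Fin.sum_univ_succ, Matrix.det_fin_three, Fin.succAbove]
  ring

/-- `det G_diag = ±4(|c₀|⁴ - |c₁|⁴)(c₀² conj(c₁)² - c₁² conj(c₀)²)` (sign
depending on the column ordering); in particular `G_diag` is invertible whenever
`|c₀| ≠ |c₁|` and `c₀² conj(c₁)² ≠ c₁² conj(c₀)²`. -/
theorem stmt14 (c₀ c₁ : ℂ) :
    ((Gdiag c₀ c₁).det =
        4 * (((‖c₀‖ : ℂ)) ^ 4 - ((‖c₁‖ : ℂ)) ^ 4) *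
          (c₀ ^ 2 * ((starRingEnd ℂ) c₁) ^ 2 - c₁ ^ 2 * ((starRingEnd ℂ) c₀) ^ 2) ∨
      (Gdiag c₀ c₁).det =
        -(4 * (((‖c₀‖ : ℂ)) ^ 4 - ((‖c₁‖ : ℂ)) ^ 4) *
          (c₀ ^ 2 * ((starRingEnd ℂ) c₁) ^ 2 - c₁ ^ 2 * ((starRingEnd ℂ) c₀) ^ 2))) ∧
    ((‖c₀‖ ≠ ‖c₁‖ ∧
        c₀ ^ 2 * ((starRingEnd ℂ) c₁) ^ 2 ≠ c₁ ^ 2 * ((starRingEnd ℂ) c₀) ^ 2) →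
      IsUnit (Gdiag c₀ c₁).det) := by
  have habs : ∀ z : ℂ, z * (starRingEnd ℂ) z = ((‖z‖ : ℂ)) ^ 2 := by
    intro z
    rw [Complex.mul_conj, ← Complex.sq_norm]
    push_cast
    ring
  have key : (Gdiag c₀ c₁).det =
      4 * (((‖c₀‖ : ℂ)) ^ 4 - ((‖c₁‖ : ℂ)) ^ 4) *
        (c₀ ^ 2 * ((starRingEnd ℂ) c₁) ^ 2 - c₁ ^ 2 * ((starRingEnd ℂ) c₀) ^ 2) := by
    rw [gdiag_det, habs, habs]
    ring
  refine ⟨Or.inl key, fun ⟨h1, h2⟩ => ?_⟩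
  rw [key, isUnit_iff_ne_zero]
  have hre : (‖c₀‖ : ℝ) ^ 4 ≠ (‖c₁‖ : ℝ) ^ 4 := by
    intro h
    exact h1 ((pow_left_strictMonoOn₀ (n := 4) (by norm_num)).injOn
      (norm_nonneg c₀) (norm_nonneg c₁) h)
  have h4 : ((‖c₀‖ : ℂ)) ^ 4 - ((‖c₁‖ : ℂ)) ^ 4 ≠ 0 :=
    sub_ne_zero.mpr (fun h => hre (by exact_mod_cast h))
  exact mul_ne_zero (mul_ne_zero (by norm_num) h4) (sub_ne_zero.mpr h2)
end

section
/- Let $G \in \mathbb{C}^{n \times m}$, $\Lambda$ an spd pattern. Suppose that for every positive semidefinite $Y \in \mathbb{C}^{n \times n}$ of the form $Y = G X_0 G^*$ for some positive semidefinite $X_0$ supported on $\Lambda$, the positive semidefinite matrix $X$ supported on $\Lambda$ with $Y = G X G^*$ is unique. Then every Hermitian $N$ supported on $\Lambda$ with $G N G^* = 0$ is zero. -/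
open Complex Matrix
open scoped ComplexOrder

lemma herm_form_real {m : ℕ} {M : Matrix (Fin m) (Fin m) ℂ} (hM : M.IsHermitian)
    (x : Fin m → ℂ) : (star x ⬝ᵥ M *ᵥ x).im = 0 := by
  rw [← Complex.conj_eq_iff_im]
  calc (starRingEnd ℂ) (star x ⬝ᵥ M *ᵥ x)
      = star (star x ⬝ᵥ M *ᵥ x) := rfl
    _ = star (M *ᵥ x) ⬝ᵥ x := by rw [star_dotProduct, star_star]
    _ = (star x ᵥ* Mᴴ) ⬝ᵥ x := by rw [star_mulVec]
    _ = star x ⬝ᵥ Mᴴ *ᵥ x := by rw [dotProduct_mulVec]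
    _ = star x ⬝ᵥ M *ᵥ x := by rw [hM.eq]

/-- if positive semidefinite matrices supported on the spd pattern `Pat` are
uniquely determined by `X ↦ G X Gᴴ`, then every Hermitian `N` supported on `Pat` with
`G N Gᴴ = 0` is zero. -/
theorem stmt16 {n m : ℕ} (G : Matrix (Fin n) (Fin m) ℂ) (Pat : Set (Fin m × Fin m))
    (hspd : ∀ l l' : Fin m, (l, l') ∈ Pat →
      (l', l) ∈ Pat ∧ (l, l) ∈ Pat ∧ (l', l') ∈ Pat)
    (huniq : ∀ X₀ X : Matrix (Fin m) (Fin m) ℂ,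
      X₀.PosSemidef → (∀ i j : Fin m, X₀ i j ≠ 0 → (i, j) ∈ Pat) →
      X.PosSemidef → (∀ i j : Fin m, X i j ≠ 0 → (i, j) ∈ Pat) →
      G * X * Gᴴ = G * X₀ * Gᴴ → X = X₀) :
    ∀ N : Matrix (Fin m) (Fin m) ℂ, N.IsHermitian →
      (∀ i j : Fin m, N i j ≠ 0 → (i, j) ∈ Pat) → G * N * Gᴴ = 0 → N = 0 := by
  intro N hN hsupp hG
  classical
  set b : ℝ := ∑ i, ∑ j, ‖N i j‖ with hb
  have hb0 : 0 ≤ b := Finset.sum_nonneg fun i _ => Finset.sum_nonneg fun j _ => by positivity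
  set c : ℝ := 1 + b with hc
  set d : Fin m → ℂ := fun i => if (i, i) ∈ Pat then (c : ℂ) else 0 with hd
  set D := Matrix.diagonal d with hD
  have hDpsd : D.PosSemidef := by
    refine Matrix.PosSemidef.diagonal ?_
    intro i
    simp only [hd, Pi.zero_apply]
    split
    · exact Complex.zero_le_real.2 (by linarith)
    · exact le_rfl
  have hDsupp : ∀ i j : Fin m, D i j ≠ 0 → (i, j) ∈ Pat := by
    intro i j h
    by_cases hij : i = j
    · subst hij
      by_contra hp
      exact h (by simp [hD, hd, hp])
    · exact absurd (Matrix.diagonal_apply_ne d hij) h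
  have hNzero : ∀ i : Fin m, (i, i) ∉ Pat → N i i = 0 := by
    intro i hp
    by_contra h
    exact hp (hsupp i i h)
  have hDNsupp : ∀ i j : Fin m, (D + N) i j ≠ 0 → (i, j) ∈ Pat := by
    intro i j h
    by_cases hij : i = j
    · subst hij
      by_contra hp
      exact h (by simp [Matrix.add_apply, hD, hd, hp, hNzero i hp])
    · apply hsupp
      intro h0
      exact h (by simp [Matrix.add_apply, Matrix.diagonal_apply_ne d hij, hD, h0])
  have hDNpsd : (D + N).PosSemidef := by
    refine Matrix.posSemidef_iff_dotProduct_mulVec.2 ⟨hDpsd.1.add hN, fun x => ?_⟩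
    have him := herm_form_real (hDpsd.1.add hN) x
    set t : ℝ := ∑ k, if (k, k) ∈ Pat then ‖x k‖ ^ 2 else 0 with ht
    have ht0 : 0 ≤ t := Finset.sum_nonneg fun k _ => by positivity
    have htk : ∀ k : Fin m, (k, k) ∈ Pat → ‖x k‖ ^ 2 ≤ t := by
      intro k hk
      have := Finset.single_le_sum (f := fun k => if (k, k) ∈ Pat then ‖x k‖ ^ 2 else 0)
        (fun k _ => by positivity) (Finset.mem_univ k)
      simpa [hk] using this
    have hsplit : star x ⬝ᵥ (D + N) *ᵥ x = star x ⬝ᵥ D *ᵥ x + star x ⬝ᵥ N *ᵥ x := by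
      rw [add_mulVec, dotProduct_add]
    have hp : star x ⬝ᵥ D *ᵥ x = ∑ i, ((if (i, i) ∈ Pat then c * ‖x i‖ ^ 2 else 0 : ℝ) : ℂ) := by
      simp only [dotProduct, hD, mulVec_diagonal, Pi.star_apply]
      refine Finset.sum_congr rfl fun i _ => ?_
      by_cases h : (i, i) ∈ Pat
      · simp only [hd, h, if_true]
        have hz : star (x i) * x i = ((‖x i‖ ^ 2 : ℝ) : ℂ) := by
          rw [Complex.star_def, mul_comm, Complex.mul_conj]
          push_cast [Complex.normSq_eq_norm_sq]
          ring
        rw [mul_left_comm, hz]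
        push_cast
        ring
      · simp [hd, h]
    have hre_p : (star x ⬝ᵥ D *ᵥ x).re = c * t := by
      rw [hp, Complex.re_sum]
      simp only [Complex.ofReal_re]
      rw [ht, Finset.mul_sum]
      refine Finset.sum_congr rfl fun i _ => ?_
      by_cases h : (i, i) ∈ Pat <;> simp [h]
    have hq1 : star x ⬝ᵥ N *ᵥ x = ∑ i, ∑ j, star (x i) * (N i j * x j) := by
      simp [dotProduct, mulVec, Finset.mul_sum]
    have hq : ‖star x ⬝ᵥ N *ᵥ x‖ ≤ b * t := by
      rw [hq1]
      have step : ∀ i j : Fin m, ‖star (x i) * (N i j * x j)‖ ≤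
          ‖N i j‖ * t := by
        intro i j
        by_cases hij : N i j = 0
        · simp [hij]
        · obtain ⟨_, hii, hjj⟩ := hspd i j (hsupp i j hij)
          have h1 : ‖x i‖ ^ 2 ≤ t := by
            simpa using htk i hii
          have h2 : ‖x j‖ ^ 2 ≤ t := by
            simpa using htk j hjj
          have heq2 : ‖star (x i) * (N i j * x j)‖ =
              ‖N i j‖ * (‖x i‖ * ‖x j‖) := by
            rw [norm_mul, norm_mul, Complex.star_def, Complex.norm_conj]; ring
          rw [heq2]
          refine mul_le_mul_of_nonneg_left ?_ (by positivity)
          nlinarith [sq_nonneg (‖x i‖ - ‖x j‖),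
            norm_nonneg (x i), norm_nonneg (x j)]
      calc ‖∑ i, ∑ j, star (x i) * (N i j * x j)‖
          ≤ ∑ i, ‖∑ j, star (x i) * (N i j * x j)‖ :=
            norm_sum_le _ _
        _ ≤ ∑ i, ∑ j, ‖star (x i) * (N i j * x j)‖ :=
            Finset.sum_le_sum fun i _ => norm_sum_le _ _
        _ ≤ ∑ i, ∑ j, ‖N i j‖ * t :=
            Finset.sum_le_sum fun i _ => Finset.sum_le_sum fun j _ => step i j
        _ = b * t := by rw [hb]; simp [Finset.sum_mul]
    have hre_q : -(b * t) ≤ (star x ⬝ᵥ N *ᵥ x).re := by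
      have h1 := Complex.abs_re_le_norm (star x ⬝ᵥ N *ᵥ x)
      have h2 := neg_abs_le ((star x ⬝ᵥ N *ᵥ x).re)
      linarith
    rw [Complex.le_def]
    refine ⟨?_, by simp [him]⟩
    rw [hsplit]
    simp only [Complex.add_re, Complex.zero_re, hre_p]
    have : c * t = t + b * t := by rw [hc]; ring
    linarith
  have heq : G * (D + N) * Gᴴ = G * D * Gᴴ := by
    rw [Matrix.mul_add, Matrix.add_mul, hG, add_zero]
  have hfin := huniq D (D + N) hDpsd hDsupp hDNpsd hDNsupp heq
  exact add_eq_left.mp hfin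
end

section
/- For a Gabor matrix $G = [M^n T^k c]_{(k,n) \in \mathbb{Z}_L \times \mathbb{Z}_L}$ with window $c \in \mathbb{C}^L$ and a symmetric pattern $\Lambda \subseteq (\mathbb{Z}_L \times \mathbb{Z}_L)^2$: if $\Lambda \supseteq (\Gamma_1 \times \Gamma_1) \cup (\Gamma_2 \times \Gamma_2)$ for disjoint $\Gamma_1, \Gamma_2$ with $|\Gamma_1| + |\Gamma_2| > L$, then for every choice of window $c$, the columns of $\overline{G} \otimes G$ indexed by $\Lambda$ are linearly dependent. -/
open Complex

/-- The column of `conj G ⊗ G` of the Gabor matrix `G = [M^n T^k c]`, indexed by a pair of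
time-frequency indices. -/
noncomputable def gaborKronCol (L : ℕ) [NeZero L] (c : ZMod L → ℂ)
    (ll : (ZMod L × ZMod L) × (ZMod L × ZMod L)) : ZMod L × ZMod L → ℂ :=
  fun ii => (starRingEnd ℂ) (gaborAtom L c ll.1.1 ll.1.2 ii.1) *
    gaborAtom L c ll.2.1 ll.2.2 ii.2

/-- if the symmetric pattern `Pat` contains `Γ₁×Γ₁ ∪ Γ₂×Γ₂` with `Γ₁, Γ₂`
disjoint and `|Γ₁| + |Γ₂| > L`, then for every window `c` the columns of `conj G ⊗ G`
indexed by `Pat` are linearly dependent. -/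
theorem stmt19 (L : ℕ) [NeZero L] (c : ZMod L → ℂ)
    (Pat : Set ((ZMod L × ZMod L) × (ZMod L × ZMod L)))
    (hsym : ∀ l l' : ZMod L × ZMod L, (l, l') ∈ Pat → (l', l) ∈ Pat)
    (Γ₁ Γ₂ : Finset (ZMod L × ZMod L)) (hdisj : Disjoint Γ₁ Γ₂)
    (hsub : (Γ₁ : Set (ZMod L × ZMod L)) ×ˢ (Γ₁ : Set (ZMod L × ZMod L)) ∪
      (Γ₂ : Set (ZMod L × ZMod L)) ×ˢ (Γ₂ : Set (ZMod L × ZMod L)) ⊆ Pat)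
    (hcard : L < Γ₁.card + Γ₂.card) :
    ¬ LinearIndependent ℂ (fun l : Pat => gaborKronCol L c l.val) := by
  classical
  haveI : Fintype ↥Pat := Set.Finite.fintype (Set.toFinite Pat)
  set atom : ZMod L × ZMod L → ZMod L → ℂ := fun l => gaborAtom L c l.1 l.2 with hatom
  set Γ : Finset (ZMod L × ZMod L) := Γ₁ ∪ Γ₂ with hΓ
  -- the atoms indexed by Γ are linearly dependent
  have hnotLI : ¬ LinearIndependent ℂ (fun l : ↥Γ => atom l.val) := by
    intro h
    have hle := h.fintype_card_le_finrank
    rw [Module.finrank_pi, Fintype.card_coe] at hle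
    rw [ZMod.card] at hle
    have hcu : Γ.card ≤ Γ₁.card + Γ₂.card := Finset.card_union_le _ _
    have hcu' : Γ₁.card + Γ₂.card ≤ Γ.card := by
      rw [Finset.card_union_of_disjoint hdisj]
    omega
  rw [Fintype.not_linearIndependent_iff] at hnotLI
  obtain ⟨a, hsum, i0, hi0⟩ := hnotLI
  set A : ZMod L × ZMod L → ℂ := fun l => if h : l ∈ Γ then a ⟨l, h⟩ else 0 with hA
  set B₁ : ZMod L × ZMod L → ℂ := fun l => if l ∈ Γ₁ then A l else 0 with hB₁
  set B₂ : ZMod L × ZMod L → ℂ := fun l => if l ∈ Γ₂ then A l else 0 with hB₂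
  set w₁ : ZMod L → ℂ := fun j => ∑ l, B₁ l * atom l j with hw₁
  set w₂ : ZMod L → ℂ := fun j => ∑ l, B₂ l * atom l j with hw₂
  have hw : ∀ j, w₁ j + w₂ j = 0 := by
    intro j
    have h0 : (∑ l : ↥Γ, a l • atom l.val) j = 0 := by rw [hsum]; rfl
    rw [Finset.sum_apply] at h0
    have h1 : (∑ l : ↥Γ, a l * atom l.val j) = ∑ l ∈ Γ, A l * atom l j := by
      rw [← Finset.sum_attach Γ (fun l => A l * atom l j)]
      apply Finset.sum_congr rfl
      intro x _
      simp [hA, x.2]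
    have hv1 : ∀ j', w₁ j' = ∑ l ∈ Γ₁, A l * atom l j' := by
      intro j'
      simp only [hw₁, hB₁, ite_mul, zero_mul]
      rw [Finset.sum_ite_mem, Finset.univ_inter]
    have hv2 : ∀ j', w₂ j' = ∑ l ∈ Γ₂, A l * atom l j' := by
      intro j'
      simp only [hw₂, hB₂, ite_mul, zero_mul]
      rw [Finset.sum_ite_mem, Finset.univ_inter]
    have h2 : (∑ l ∈ Γ, A l * atom l j) = w₁ j + w₂ j := by
      rw [hΓ, Finset.sum_union hdisj, hv1 j, hv2 j]
    rw [← h2, ← h1]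
    simpa [smul_eq_mul] using h0

  have hneg : ∀ j, w₂ j = - w₁ j := fun j => by linear_combination hw j
  set N : (ZMod L × ZMod L) × (ZMod L × ZMod L) → ℂ :=
    fun p => (starRingEnd ℂ) (B₁ p.1) * B₁ p.2 - (starRingEnd ℂ) (B₂ p.1) * B₂ p.2 with hN
  have hNsupp : ∀ p, p ∉ Pat → N p = 0 := by
    intro p hp
    have h1 : ¬ (p.1 ∈ Γ₁ ∧ p.2 ∈ Γ₁) := by
      intro h
      exact hp (hsub (Or.inl ⟨by simpa using h.1, by simpa using h.2⟩))
    have h2 : ¬ (p.1 ∈ Γ₂ ∧ p.2 ∈ Γ₂) := by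
      intro h
      exact hp (hsub (Or.inr ⟨by simpa using h.1, by simpa using h.2⟩))
    have e1 : (starRingEnd ℂ) (B₁ p.1) * B₁ p.2 = 0 := by
      rcases Decidable.not_and_iff_or_not.mp h1 with h | h <;> simp [hB₁, h]
    have e2 : (starRingEnd ℂ) (B₂ p.1) * B₂ p.2 = 0 := by
      rcases Decidable.not_and_iff_or_not.mp h2 with h | h <;> simp [hB₂, h]
    rw [hN]
    simp only [e1, e2, sub_zero]
  -- the key vanishing identity
  have key : ∀ i j : ZMod L,
      (∑ p : (ZMod L × ZMod L) × (ZMod L × ZMod L),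
        N p * ((starRingEnd ℂ) (atom p.1 i) * atom p.2 j)) = 0 := by
    intro i j
    have e1 : (starRingEnd ℂ) (w₁ i) * w₁ j
        = ∑ l, ∑ l', ((starRingEnd ℂ) (B₁ l) * B₁ l') *
            ((starRingEnd ℂ) (atom l i) * atom l' j) := by
      rw [hw₁]
      simp only [map_sum, map_mul]
      rw [Finset.sum_mul_sum]
      apply Finset.sum_congr rfl; intro x _
      apply Finset.sum_congr rfl; intro y _
      ring
    have e2 : (starRingEnd ℂ) (w₂ i) * w₂ j
        = ∑ l, ∑ l', ((starRingEnd ℂ) (B₂ l) * B₂ l') *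
            ((starRingEnd ℂ) (atom l i) * atom l' j) := by
      rw [hw₂]
      simp only [map_sum, map_mul]
      rw [Finset.sum_mul_sum]
      apply Finset.sum_congr rfl; intro x _
      apply Finset.sum_congr rfl; intro y _
      ring
    rw [Fintype.sum_prod_type]
    simp only [hN, sub_mul]
    rw [Finset.sum_congr rfl (fun l _ => Finset.sum_sub_distrib _ _), Finset.sum_sub_distrib,
      ← e1, ← e2, hneg i, hneg j, map_neg]
    ring
  -- now produce the dependence relation
  rw [Fintype.not_linearIndependent_iff]
  refine ⟨fun p => N p.val, ?_, ?_⟩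
  · funext ii
    rw [Finset.sum_apply]
    have hstep : (∑ p : ↥Pat, (N p.val • gaborKronCol L c p.val) ii)
        = ∑ p : ↥Pat, N p.val * ((starRingEnd ℂ) (atom p.val.1 ii.1) * atom p.val.2 ii.2) := by
      apply Finset.sum_congr rfl
      intro p _
      simp [gaborKronCol, hatom, smul_eq_mul]
    rw [hstep, Finset.sum_set_coe
      (f := fun p => N p * ((starRingEnd ℂ) (atom p.1 ii.1) * atom p.2 ii.2))]
    rw [Finset.sum_subset (Finset.subset_univ Pat.toFinset)]
    · simpa using key ii.1 ii.2
    · intro p _ hp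
      rw [hNsupp p (by simpa using hp)]
      simp
  · -- a nonzero coefficient
    have hmem : (i0 : ZMod L × ZMod L) ∈ Γ₁ ∪ Γ₂ := i0.2
    have hAi0 : A i0.val = a i0 := by simp [hA, i0.2]
    have hAne : A i0.val ≠ 0 := by rw [hAi0]; exact hi0
    rcases Finset.mem_union.mp hmem with h1 | h2
    · have hPmem : ((i0 : ZMod L × ZMod L), (i0 : ZMod L × ZMod L)) ∈ Pat :=
        hsub (Or.inl ⟨by simpa using h1, by simpa using h1⟩)
      refine ⟨⟨(i0.val, i0.val), hPmem⟩, ?_⟩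
      have h2' : (i0 : ZMod L × ZMod L) ∉ Γ₂ := fun h =>
        (Finset.disjoint_left.mp hdisj h1) h
      have hc : (starRingEnd ℂ) (A i0.val) ≠ 0 := by simpa using hAne
      simp only [hN, hB₁, hB₂, h1, h2', if_true, if_false, map_zero, zero_mul, sub_zero]
      exact mul_ne_zero hc hAne
    · have hPmem : ((i0 : ZMod L × ZMod L), (i0 : ZMod L × ZMod L)) ∈ Pat :=
        hsub (Or.inr ⟨by simpa using h2, by simpa using h2⟩)
      refine ⟨⟨(i0.val, i0.val), hPmem⟩, ?_⟩
      have h1' : (i0 : ZMod L × ZMod L) ∉ Γ₁ := fun h =>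
        (Finset.disjoint_left.mp hdisj h) h2
      have hc : (starRingEnd ℂ) (A i0.val) ≠ 0 := by simpa using hAne
      simp only [hN, hB₁, hB₂, h2, h1', if_true, if_false, map_zero, zero_mul, zero_sub]
      exact neg_ne_zero.mpr (mul_ne_zero hc hAne)
end
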